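/- Let ħ be a nonzero complex number, N a natural number, and Q, t complex polynomials satisfying Baxter's equation for the spin-1 XXX chain: (λ + iħ)^N Q(λ − iħ) + (λ − iħ)^N Q(λ + iħ) = t(λ) Q(λ) as polynomials in λ. Assume Q(0) ≠ 0, Q(iħ) ≠ 0 and Q(−iħ) ≠ 0. Then λ^N divides the polynomial t(λ + iħ)·t(λ)·t(λ − iħ) − (λ − iħ)^N (λ + 2iħ)^N t(λ − iħ) − (λ + iħ)^N (λ − 2iħ)^N t(λ + iħ); i.e. the degree-3 characteristic equation t(ε+iħ) t(ε) t(ε−iħ) = (ε−iħ)^N (ε+2iħ)^N t(ε−iħ) + (ε+iħ)^N (ε−2iħ)^N t(ε+iħ) + O(ε^N) holds. -/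

import Mathlib

open Polynomial Complex

/-- from Baxter's equation for the spin-1 XXX chain, the degree-3
characteristic equation
`t(ε+iħ) t(ε) t(ε-iħ) = (ε-iħ)^N (ε+2iħ)^N t(ε-iħ) + (ε+iħ)^N (ε-2iħ)^N t(ε+iħ) + O(ε^N)`
follows, i.e. `λ^N` divides the stated combination. -/
theorem xxx_characteristic_spin_one
    (hbar : ℂ) (hhbar : hbar ≠ 0) (N : ℕ)
    (Q t : Polynomial ℂ)
    (baxter : (X + C (I * hbar)) ^ N * Q.comp (X - C (I * hbar))
        + (X - C (I * hbar)) ^ N * Q.comp (X + C (I * hbar))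
      = t * Q)
    (hQ0 : Q.eval 0 ≠ 0) (hQp : Q.eval (I * hbar) ≠ 0) (hQm : Q.eval (-(I * hbar)) ≠ 0) :
    (X : Polynomial ℂ) ^ N ∣
      t.comp (X + C (I * hbar)) * t * t.comp (X - C (I * hbar))
        - (X - C (I * hbar)) ^ N * (X + C (2 * I * hbar)) ^ N * t.comp (X - C (I * hbar))
        - (X + C (I * hbar)) ^ N * (X - C (2 * I * hbar)) ^ N * t.comp (X + C (I * hbar)) := by
  set η := I * hbar with hη
  have hC2 : C (2 * I * hbar) = C η + C η := by rw [← C_add, hη]; ring_nf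
  have hpp : (X + C η).comp (X + C η) = X + C (2 * I * hbar) := by
    simp [add_comp, hC2]; ring
  have hmp : (X - C η).comp (X + C η) = X := by simp
  have hpm : (X + C η).comp (X - C η) = X := by simp
  have hmm : (X - C η).comp (X - C η) = X - C (2 * I * hbar) := by
    simp [sub_comp, hC2]; ring
  have Bp : (X + C (2 * I * hbar)) ^ N * Q + X ^ N * Q.comp (X + C (2 * I * hbar))
      = t.comp (X + C η) * Q.comp (X + C η) := by
    have h := congrArg (fun p => p.comp (X + C η)) baxter
    simpa only [add_comp, mul_comp, pow_comp, comp_assoc, hpp, hmp, comp_X] using h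
  have Bm : X ^ N * Q.comp (X - C (2 * I * hbar)) + (X - C (2 * I * hbar)) ^ N * Q
      = t.comp (X - C η) * Q.comp (X - C η) := by
    have h := congrArg (fun p => p.comp (X - C η)) baxter
    simpa only [add_comp, mul_comp, pow_comp, comp_assoc, hpm, hmm, comp_X] using h
  set a := (X + C (2 * I * hbar)) ^ N with ha
  set b := (X + C η) ^ N with hb
  set c := (X - C η) ^ N with hc
  set d := (X - C (2 * I * hbar)) ^ N with hd
  set u := Q.comp (X + C (2 * I * hbar)) with hu
  set v := Q.comp (X - C (2 * I * hbar)) with hv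
  set qp := Q.comp (X + C η) with hqp
  set qm := Q.comp (X - C η) with hqm
  set tp := t.comp (X + C η) with htp
  set tm := t.comp (X - C η) with htm
  set P := Q * qp * qm with hP
  have key : (tp * t * tm - c * a * tm - b * d * tp) * P
      = X ^ N * (u * (b * qm + c * qp) * (X ^ N * v + d * Q)
          + a * Q * v * (b * qm + c * qp) - a * c * Q * qp * v - b * d * Q * qm * u) := by
    have e1 := Bp
    have e2 := baxter
    have e3 := Bm
    rw [hP]
    linear_combination (t * Q * tm * qm - b * d * Q * qm) * e1.symm
      + ((a * Q + X ^ N * u) * tm * qm) * e2.symm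
      + ((a * Q + X ^ N * u) * (b * qm + c * qp) - c * a * Q * qp) * e3.symm
  have hdvdmul : (X : Polynomial ℂ) ^ N ∣ (tp * t * tm - c * a * tm - b * d * tp) * P :=
    key ▸ Dvd.intro _ rfl
  have hPne : ¬ (X : Polynomial ℂ) ∣ P := by
    rw [X_dvd_iff, coeff_zero_eq_eval_zero]
    simp only [hP, hqp, hqm, eval_mul, eval_comp, eval_add, eval_sub, eval_X, eval_C, zero_add,
      zero_sub]
    exact fun h => by
      rcases mul_eq_zero.mp h with h' | h'
      · rcases mul_eq_zero.mp h' with h'' | h''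
        · exact hQ0 h''
        · exact hQp h''
      · exact hQm h'
  exact (prime_X (R := ℂ)).pow_dvd_of_dvd_mul_right N hPne hdvdmul
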